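/- Let C ⊆ [0,1] be a compact set with positive Lebesgue measure μ(C) > 0, and define φ(t) = μ(C ∩ [inf C, t]) / μ(C). Then φ restricted to C is Lipschitz with constant μ(C)⁻¹ and φ(C) = [0,1]. -/

import Mathlib

open MeasureTheory

theorem cantor_map_lipschitz_surjective (C : Set ℝ) (hC : IsCompact C)
    (hsub : C ⊆ Set.Icc 0 1) (hpos : 0 < volume C) :
    LipschitzOnWith (volume C).toNNReal⁻¹
      (fun t => (volume (C ∩ Set.Icc (sInf C) t)).toReal / (volume C).toReal) C ∧
    (fun t => (volume (C ∩ Set.Icc (sInf C) t)).toReal / (volume C).toReal) '' C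
      = Set.Icc (0 : ℝ) 1 := by
  have hne : C.Nonempty := nonempty_of_measure_ne_zero hpos.ne'
  have hfin : volume C ≠ ⊤ := by
    refine (lt_of_le_of_lt (measure_mono hsub) ?_).ne
    simp
  set m := (volume C).toReal with hm
  have hm0 : 0 < m := ENNReal.toReal_pos hpos.ne' hfin
  set a0 := sInf C with ha0
  set g : ℝ → ENNReal := fun t => volume (C ∩ Set.Icc a0 t) with hg
  set f : ℝ → ℝ := fun t => (g t).toReal / m with hf
  have hgle : ∀ t, g t ≤ volume C := fun t => measure_mono Set.inter_subset_left
  have hgfin : ∀ t, g t ≠ ⊤ := fun t => ((hgle t).trans_lt hfin.lt_top).ne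
  have hstep : ∀ s t : ℝ, s ≤ t → (g t).toReal ≤ (g s).toReal + (t - s) := by
    intro s t hst
    have h1 : g t ≤ g s + ENNReal.ofReal (t - s) := by
      calc g t ≤ volume ((C ∩ Set.Icc a0 s) ∪ Set.Ioc s t) := by
            apply measure_mono
            rintro x ⟨hxC, hx1, hx2⟩
            rcases le_or_gt x s with h | h
            · exact Or.inl ⟨hxC, hx1, h⟩
            · exact Or.inr ⟨h, hx2⟩
        _ ≤ g s + volume (Set.Ioc s t) := measure_union_le _ _
        _ = g s + ENNReal.ofReal (t - s) := by rw [Real.volume_Ioc]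
    calc (g t).toReal ≤ (g s + ENNReal.ofReal (t - s)).toReal := by
          apply ENNReal.toReal_mono _ h1
          exact ENNReal.add_ne_top.2 ⟨hgfin s, ENNReal.ofReal_ne_top⟩
      _ = (g s).toReal + (t - s) := by
          rw [ENNReal.toReal_add (hgfin s) ENNReal.ofReal_ne_top,
            ENNReal.toReal_ofReal (by linarith)]
  have hgmono : ∀ s t : ℝ, s ≤ t → (g s).toReal ≤ (g t).toReal := by
    intro s t hst
    exact ENNReal.toReal_mono (hgfin t)
      (measure_mono (Set.inter_subset_inter_right _ (Set.Icc_subset_Icc_right hst)))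
  have hcoe : (((volume C).toNNReal⁻¹ : NNReal) : ℝ) = m⁻¹ := by
    push_cast
    rw [hm]
  have hlip : LipschitzWith (volume C).toNNReal⁻¹ f := by
    rw [lipschitzWith_iff_dist_le_mul]
    have key : ∀ u v : ℝ, u ≤ v → dist (f v) (f u) ≤ m⁻¹ * dist v u := by
      intro u v huv
      have h1 := hstep u v huv
      have h2 := hgmono u v huv
      have hfle : f u ≤ f v := by simp only [hf]; gcongr
      rw [Real.dist_eq, Real.dist_eq, abs_of_nonneg (sub_nonneg.2 hfle),
        abs_of_nonneg (sub_nonneg.2 huv)]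
      rw [hf]
      simp only
      rw [div_sub_div_same, div_le_iff₀ hm0]
      calc (g v).toReal - (g u).toReal ≤ v - u := by linarith
        _ = m⁻¹ * (v - u) * m := by field_simp
    intro s t
    rw [hcoe]
    rcases le_total s t with h | h
    · rw [dist_comm (f s), dist_comm s]; exact key s t h
    · exact key t s h
  -- f values in [0,1]
  have hf01 : ∀ t, f t ∈ Set.Icc (0:ℝ) 1 := by
    intro t
    constructor
    · exact div_nonneg ENNReal.toReal_nonneg hm0.le
    · rw [hf]
      simp only
      rw [div_le_one hm0]
      exact ENNReal.toReal_mono hfin (hgle t)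
  -- endpoints
  have ha0C : a0 ∈ C := hC.sInf_mem hne
  have hb0C : sSup C ∈ C := hC.sSup_mem hne
  set b0 := sSup C with hb0
  have hCsub : C ⊆ Set.Icc a0 b0 := fun x hx =>
    ⟨csInf_le hC.bddBelow hx, le_csSup hC.bddAbove hx⟩
  have hfa0 : f a0 = 0 := by
    rw [hf]
    simp only
    have : g a0 = 0 := by
      rw [hg]
      simp only
      refine measure_mono_null (fun x hx => ?_) (measure_singleton a0)
      have := hx.2
      rw [Set.Icc_self] at this
      exact this
    rw [this]
    simp
  have hfb0 : f b0 = 1 := by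
    rw [hf]
    simp only
    have : C ∩ Set.Icc a0 b0 = C := Set.inter_eq_left.2 hCsub
    rw [hg]
    simp only [this]
    rw [← hm, div_self hm0.ne']
  have hab : a0 ≤ b0 := csInf_le_csSup hne hC.bddBelow hC.bddAbove
  constructor
  · exact hlip.lipschitzOnWith
  · apply Set.Subset.antisymm
    · rintro y ⟨t, _, rfl⟩
      exact hf01 t
    · intro y hy
      have hIVT : Set.Icc (f a0) (f b0) ⊆ f '' Set.Icc a0 b0 :=
        intermediate_value_Icc hab hlip.continuous.continuousOn
      obtain ⟨x, hxI, hfx⟩ := hIVT (by rw [hfa0, hfb0]; exact hy)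
      -- pull back to a point of C
      set a := sSup (C ∩ Set.Icc a0 x) with ha
      have hCx : (C ∩ Set.Icc a0 x).Nonempty := ⟨a0, ha0C, le_refl a0, hxI.1⟩
      have hbdd : BddAbove (C ∩ Set.Icc a0 x) := hC.bddAbove.mono Set.inter_subset_left
      have haMem : a ∈ C ∩ Set.Icc a0 x := (hC.inter_right isClosed_Icc).sSup_mem hCx
      have hempty : C ∩ Set.Ioc a x = ∅ := by
        rw [Set.eq_empty_iff_forall_notMem]
        rintro c ⟨hcC, hc1, hc2⟩
        have : c ∈ C ∩ Set.Icc a0 x := ⟨hcC, haMem.2.1.trans hc1.le, hc2⟩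
        exact absurd (le_csSup hbdd this) (not_le.2 hc1)
      have hgeq : g x = g a := by
        rw [hg]
        simp only
        congr 1
        ext c
        constructor
        · rintro ⟨hcC, hc1, hc2⟩
          refine ⟨hcC, hc1, ?_⟩
          by_contra h
          push_neg at h
          exact (Set.eq_empty_iff_forall_notMem.1 hempty c ⟨hcC, h, hc2⟩).elim
        · rintro ⟨hcC, hc1, hc2⟩
          exact ⟨hcC, hc1, hc2.trans haMem.2.2⟩
      exact ⟨a, haMem.1, by rw [hf]; simp only; rw [← hgeq]; exact hfx⟩
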